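/- Let V be a finite-dimensional vector space over ZMod 2, let B be a nondegenerate symmetric bilinear form on V, and let q be a ℤ/4-quadratic enhancement of B. Then the Gauss sum S(q) = Σ_{x ∈ V} I^{(q x).val} satisfies S(q)^8 = (Fintype.card V)^4; equivalently, the Arf–Brown invariant AB(q) := S(q)/√(Fintype.card V) is an 8th root of unity. -/

import Mathlib

private lemma I_pow_mod (n : ℕ) : Complex.I ^ n = Complex.I ^ (n % 4) := by
  conv_lhs => rw [← Nat.mod_add_div n 4]
  rw [pow_add, pow_mul, Complex.I_pow_four, one_pow, mul_one]

private lemma neg_one_pow_mod (n : ℕ) : (-1 : ℂ) ^ n = (-1 : ℂ) ^ (n % 2) := by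
  conv_lhs => rw [← Nat.mod_add_div n 2]
  rw [pow_add, pow_mul, neg_one_sq, one_pow, mul_one]

private lemma chi_add (a b : ZMod 4) :
    Complex.I ^ (a + b).val = Complex.I ^ a.val * Complex.I ^ b.val := by
  rw [ZMod.val_add, ← pow_add]
  exact (I_pow_mod _).symm

private lemma m1_add (a b : ZMod 2) :
    (-1 : ℂ) ^ (a + b).val = (-1 : ℂ) ^ a.val * (-1 : ℂ) ^ b.val := by
  rw [ZMod.val_add, ← pow_add]
  exact (neg_one_pow_mod _).symm

private lemma zmod2_cases (b : ZMod 2) : b = 0 ∨ b = 1 := by revert b; decide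

private lemma chi_two_mul (b : ZMod 2) :
    Complex.I ^ (2 * ((b.val : ℕ) : ZMod 4)).val = (-1 : ℂ) ^ b.val := by
  rcases zmod2_cases b with h | h <;> subst h
  · rw [show (2 * (((0 : ZMod 2).val : ℕ) : ZMod 4)).val = 0 by decide,
      show (0 : ZMod 2).val = 0 by decide]
    norm_num
  · rw [show (2 * (((1 : ZMod 2).val : ℕ) : ZMod 4)).val = 2 by decide,
      show (1 : ZMod 2).val = 1 by decide]
    norm_num [Complex.I_sq]

private lemma char_sum_zero {V : Type*} [AddCommGroup V] [Module (ZMod 2) V] [Fintype V] :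
    ∑ x : V, (-1 : ℂ) ^ (((0 : V →ₗ[ZMod 2] ZMod 2)) x).val = (Fintype.card V : ℂ) := by
  simp only [LinearMap.zero_apply, ZMod.val_zero, pow_zero, Finset.sum_const,
    Finset.card_univ, nsmul_eq_mul, mul_one]

private lemma char_sum_ne {V : Type*} [AddCommGroup V] [Module (ZMod 2) V] [Fintype V]
    (φ : V →ₗ[ZMod 2] ZMod 2) (h : φ ≠ 0) :
    ∑ x : V, (-1 : ℂ) ^ (φ x).val = 0 := by
  obtain ⟨x0, hx0⟩ : ∃ x, φ x ≠ 0 := by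
    by_contra hc; push_neg at hc; exact h (by ext x; simp [hc x])
  have hφ1 : φ x0 = 1 := by
    have : ∀ a : ZMod 2, a ≠ 0 → a = 1 := by decide
    exact this _ hx0
  have key : ∑ x : V, (-1 : ℂ) ^ (φ x).val = -∑ x : V, (-1 : ℂ) ^ (φ x).val := by
    conv_lhs =>
      rw [(Fintype.sum_equiv (Equiv.addRight x0)
        (fun x => (-1 : ℂ) ^ (φ (x + x0)).val)
        (fun x => (-1 : ℂ) ^ (φ x).val) (fun x => rfl)).symm]
    rw [← Finset.sum_neg_distrib]
    refine Finset.sum_congr rfl fun x _ => ?_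
    simp only [map_add, hφ1]
    have : ∀ a : ZMod 2, (-1 : ℂ) ^ (a + 1).val = -(-1 : ℂ) ^ a.val := by
      intro a
      rcases zmod2_cases a with h | h <;> subst h <;>
        norm_num [show ((0 : ZMod 2) + 1).val = 1 from rfl,
          show ((1 : ZMod 2) + 1).val = 0 from rfl, show (2 : ZMod 2).val = 0 by decide,
          show (0 : ZMod 2).val = 0 from rfl, show (1 : ZMod 2).val = 1 from rfl]
    exact this _
  linear_combination key / 2

/-- The Arf–Brown Gauss sum of a `ℤ/4`-quadratic enhancement of a nondegenerate symmetric
bilinear form on a finite-dimensional `ZMod 2`-vector space is, up to normalization by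
`√(card V)`, an eighth root of unity: `S(q)^8 = (card V)^4`. -/
theorem arf_brown_gauss_sum_eighth_root
    (V : Type*) [AddCommGroup V] [Module (ZMod 2) V] [FiniteDimensional (ZMod 2) V]
    [Fintype V]
    (B : LinearMap.BilinForm (ZMod 2) V)
    (hsymm : ∀ x y : V, B x y = B y x)
    (hnd : Function.Bijective fun x : V => (B x : Module.Dual (ZMod 2) V))
    (q : V → ZMod 4)
    (hq : ∀ x y : V, q (x + y) = q x + q y + 2 * ((B x y).val : ZMod 4)) :
    (∑ x : V, Complex.I ^ (q x).val) ^ 8 = (Fintype.card V : ℂ) ^ 4 := by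
  classical
  -- the diagonal is a linear functional
  have hz2 : ∀ a : ZMod 2, a + a = 0 := by decide
  let ℓ : V →ₗ[ZMod 2] ZMod 2 :=
    { toFun := fun x => B x x
      map_add' := by
        intro x y
        show B (x + y) (x + y) = B x x + B y y
        have h1 : B (x + y) (x + y) = B x x + (B x y + B y x) + B y y := by
          simp [map_add]; ring
        rw [h1, hsymm x y, hz2, add_zero]
      map_smul' := by
        intro r x
        show B (r • x) (r • x) = r • B x x
        rcases zmod2_cases r with h | h <;> subst h <;> simp }
  have hℓ : ∀ x, ℓ x = B x x := fun x => rfl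
  obtain ⟨c, hc⟩ := hnd.2 ℓ
  have hc' : (B c : Module.Dual (ZMod 2) V) = ℓ := hc
  have hcx : ∀ x, B c x = B x x := fun x => by
    rw [show B c x = ℓ x from congrFun (congrArg DFunLike.coe hc') x, hℓ]
  -- q 0 = 0
  have hq0 : q 0 = 0 := by
    have h := hq 0 0
    simp only [add_zero, map_zero, LinearMap.zero_apply, ZMod.val_zero, Nat.cast_zero,
      mul_zero] at h
    linear_combination -h
  -- q x + q x = 2 * B x x
  have h2q : ∀ x : V, q x + q x = 2 * (((B x x).val : ℕ) : ZMod 4) := by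
    intro x
    have hxx : x + x = 0 := by
      calc x + x = ((1 : ZMod 2) + 1) • x := by rw [add_smul, one_smul]
        _ = (0 : ZMod 2) • x := by rw [show (1 : ZMod 2) + 1 = 0 by decide]
        _ = 0 := zero_smul _ x
    have h := hq x x
    rw [hxx, hq0] at h
    have h4 : (4 : ZMod 4) = 0 := by decide
    linear_combination -h - (((B x x).val : ZMod 4)) * h4
  set f : V → ℂ := fun x => Complex.I ^ (q x).val with hf
  have step1 : (∑ x : V, f x) ^ 2 = ∑ x : V, ∑ y : V, f x * f y := by
    rw [sq, Finset.sum_mul_sum]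
  have step2 : ∀ x : V, ∑ y : V, f x * f y = ∑ s : V, f x * f (x + s) := by
    intro x
    exact (Fintype.sum_equiv (Equiv.addLeft x)
      (fun s => f x * f (x + s)) (fun y => f x * f y) (fun s => rfl)).symm
  have step3 : ∀ x s : V,
      f x * f (x + s) = f s * ((-1 : ℂ) ^ (B x x).val * (-1 : ℂ) ^ (B x s).val) := by
    intro x s
    simp only [hf, hq x s, chi_add]
    rw [show Complex.I ^ (q x).val * (Complex.I ^ (q x).val * Complex.I ^ (q s).val *
        Complex.I ^ (2 * (((B x s).val : ℕ) : ZMod 4)).val) =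
        (Complex.I ^ (q x).val * Complex.I ^ (q x).val) * Complex.I ^ (q s).val *
        Complex.I ^ (2 * (((B x s).val : ℕ) : ZMod 4)).val by ring,
      ← chi_add, h2q x, chi_two_mul, chi_two_mul]
    ring
  have hpt : ∀ s x : V, (-1 : ℂ) ^ (B x x).val * (-1 : ℂ) ^ (B x s).val
      = (-1 : ℂ) ^ ((ℓ + B s : V →ₗ[ZMod 2] ZMod 2) x).val := by
    intro s x
    rw [LinearMap.add_apply, m1_add, hℓ, hsymm s x]
  have hiff : ∀ s : V, (ℓ + B s : V →ₗ[ZMod 2] ZMod 2) = 0 ↔ s = c := by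
    intro s
    constructor
    · intro h
      apply hnd.1
      show (B s : Module.Dual (ZMod 2) V) = B c
      rw [hc']
      ext x
      have h1 := congrFun (congrArg DFunLike.coe h) x
      simp only [LinearMap.add_apply, LinearMap.zero_apply] at h1
      have h2 : ∀ a b : ZMod 2, a + b = 0 → b = a := by decide
      exact h2 _ _ h1
    · intro h; subst h
      ext x
      simp only [LinearMap.add_apply, LinearMap.zero_apply, hℓ, hcx]
      exact hz2 _
  have step4 : (∑ x : V, f x) ^ 2 = (Fintype.card V : ℂ) * f c := by
    rw [step1]
    calc ∑ x : V, ∑ y : V, f x * f y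
        = ∑ x : V, ∑ s : V, f s * ((-1 : ℂ) ^ (B x x).val * (-1 : ℂ) ^ (B x s).val) := by
          refine Finset.sum_congr rfl fun x _ => ?_
          rw [step2 x]
          exact Finset.sum_congr rfl fun s _ => step3 x s
      _ = ∑ s : V, f s * ∑ x : V, (-1 : ℂ) ^ ((ℓ + B s : V →ₗ[ZMod 2] ZMod 2) x).val := by
          rw [Finset.sum_comm]
          refine Finset.sum_congr rfl fun s _ => ?_
          rw [Finset.mul_sum]
          exact Finset.sum_congr rfl fun x _ => by rw [hpt s x]
      _ = ∑ s : V, if s = c then f s * (Fintype.card V : ℂ) else 0 := by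
          refine Finset.sum_congr rfl fun s _ => ?_
          by_cases hs : s = c
          · rw [if_pos hs]
            congr 1
            have : (ℓ + B s : V →ₗ[ZMod 2] ZMod 2) = 0 := (hiff s).mpr hs
            rw [this]
            exact char_sum_zero
          · rw [if_neg hs]
            rw [char_sum_ne _ (fun h0 => hs ((hiff s).mp h0)), mul_zero]
      _ = f c * (Fintype.card V : ℂ) := by
          rw [Finset.sum_ite_eq' Finset.univ c (fun s => f s * (Fintype.card V : ℂ))]
          simp
      _ = (Fintype.card V : ℂ) * f c := by ring
  have step5 : (∑ x : V, f x) ^ 8 = ((∑ x : V, f x) ^ 2) ^ 4 := by ring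
  rw [step5, step4, mul_pow]
  have : f c ^ 4 = 1 := by
    show (Complex.I ^ (q c).val) ^ 4 = 1
    rw [← pow_mul, mul_comm, pow_mul, Complex.I_pow_four, one_pow]
  rw [this, mul_one]
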